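/- Let F : ℝ^m → ℝ^n be twice continuously differentiable with F(θ*) = 0, and set f(θ) = (1/2)‖F(θ)‖₂². Let W be a precompact open neighborhood of θ* and let 0 < σ_min ≤ σ_max be such that every nonzero singular value of the Jacobian J_F(θ) lies in [σ_min, σ_max] for all θ ∈ W, with J_F of constant rank r on W. Let L_J be a Lipschitz constant of θ ↦ J_F(θ) on W (in spectral norm), and let C_⊥ > 0 be such that ‖P_{range(J_F(θ))^⊥} F(θ)‖₂ ≤ C_⊥ ‖F(θ)‖₂² for all θ ∈ W, where P_{range(J_F(θ))^⊥} is the orthogonal projection onto the orthogonal complement of the column space of J_F(θ). Fix a step size 0 < α ≤ 1/σ_max and assume (C_⊥ + L_J α²/2)‖F(θ)‖₂ ≤ α σ_min / 2 for all θ ∈ W. Then there exists an open neighborhood U_α ⊆ W of θ* such that for any initial point θ₀ ∈ U_α, the SPGD iterates θ_{t+1} = θ_t − α V_t U_tᵀ F(θ_t), where J_F(θ_t) = U_t Σ_t V_tᵀ is the rank-r economy singular value decomposition of J_F(θ_t), remain in W for all t ≥ 0 and satisfy ‖F(θ_t)‖₂ ≤ (1 − α σ_min/2)^t ‖F(θ₀)‖₂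 for all t ≥ 0; consequently f(θ_t) ≤ (1 − α σ_min/2)^t f(θ₀). -/

import Mathlib

open Matrix
open scoped Matrix.Norms.L2Operator

/-- The continuous linear map `x ↦ M x` between Euclidean spaces induced by a matrix. -/
noncomputable def mulVecCLM {n m : ℕ} (M : Matrix (Fin n) (Fin m) ℝ) :
    EuclideanSpace ℝ (Fin m) →L[ℝ] EuclideanSpace ℝ (Fin n) :=
  LinearMap.toContinuousLinearMap (Matrix.toEuclideanLin M)

namespace SPGDaux

variable {n m r : ℕ}

lemma toEL_mul (A : Matrix (Fin n) (Fin r) ℝ) (B : Matrix (Fin r) (Fin m) ℝ)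
    (x : EuclideanSpace ℝ (Fin m)) :
    toEuclideanLin (A * B) x = toEuclideanLin A (toEuclideanLin B x) := by
  simp [Matrix.toEuclideanLin_apply, Matrix.mulVec_mulVec]

lemma adj_eq (U : Matrix (Fin n) (Fin r) ℝ) :
    Matrix.toEuclideanLin (Uᵀ) = LinearMap.adjoint (Matrix.toEuclideanLin U) := by
  rw [← Matrix.toEuclideanLin_conjTranspose_eq_adjoint]; congr 1

lemma inner_transpose (U : Matrix (Fin n) (Fin r) ℝ) (x : EuclideanSpace ℝ (Fin r))
    (y : EuclideanSpace ℝ (Fin n)) :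
    (inner ℝ (toEuclideanLin U x) y : ℝ)
      = inner ℝ x ((toEuclideanLin (Uᵀ)) y : EuclideanSpace ℝ (Fin r)) := by
  rw [adj_eq]
  exact (LinearMap.adjoint_inner_right (𝕜 := ℝ) (toEuclideanLin U) x y).symm

lemma isometry_of_orth (U : Matrix (Fin n) (Fin r) ℝ) (h : Uᵀ * U = 1)
    (x : EuclideanSpace ℝ (Fin r)) : ‖toEuclideanLin U x‖ = ‖x‖ := by
  have h3 : (inner ℝ (toEuclideanLin U x) (toEuclideanLin U x) : ℝ) = inner ℝ x x := by
    rw [inner_transpose]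
    congr 1
    rw [← toEL_mul, h]
    simp [Matrix.toEuclideanLin_apply]
  rw [norm_eq_sqrt_real_inner, norm_eq_sqrt_real_inner, h3]

lemma transpose_contract (U : Matrix (Fin n) (Fin r) ℝ) (h : Uᵀ * U = 1)
    (y : EuclideanSpace ℝ (Fin n)) : ‖toEuclideanLin (Uᵀ) y‖ ≤ ‖y‖ := by
  set x : EuclideanSpace ℝ (Fin r) := toEuclideanLin (Uᵀ) y with hx
  have h1 : (‖x‖ : ℝ) ^ 2 = inner ℝ (toEuclideanLin U x) y := by
    rw [inner_transpose, ← hx, real_inner_self_eq_norm_sq]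
  have h2 : (inner ℝ (toEuclideanLin U x) y : ℝ) ≤ ‖x‖ * ‖y‖ := by
    calc (inner ℝ (toEuclideanLin U x) y : ℝ) ≤ ‖toEuclideanLin U x‖ * ‖y‖ :=
          real_inner_le_norm _ _
      _ = ‖x‖ * ‖y‖ := by rw [isometry_of_orth U h]
  rcases eq_or_lt_of_le (norm_nonneg x) with h0 | h0
  · rw [← h0]; exact norm_nonneg y
  · nlinarith [h1, h2]

lemma diag_contract (d : Fin r → ℝ) (c : ℝ) (hc : 0 ≤ c) (hd : ∀ i, |d i| ≤ c)
    (y : EuclideanSpace ℝ (Fin r)) :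
    ‖toEuclideanLin (Matrix.diagonal d) y‖ ≤ c * ‖y‖ := by
  have hyy : ∀ z : EuclideanSpace ℝ (Fin r), ‖z‖ = Real.sqrt (∑ i, ‖z i‖ ^ 2) :=
    fun z => EuclideanSpace.norm_eq z
  rw [hyy, hyy]
  have happ : ∀ i, (toEuclideanLin (Matrix.diagonal d) y) i = d i * y i := by
    intro i
    simp [Matrix.toEuclideanLin_apply, Matrix.mulVec_diagonal]
  have hsum : (∑ i, ‖(toEuclideanLin (Matrix.diagonal d) y) i‖ ^ 2)
      ≤ c ^ 2 * ∑ i, ‖y i‖ ^ 2 := by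
    rw [Finset.mul_sum]
    apply Finset.sum_le_sum
    intro i _
    rw [happ i]
    have := hd i
    have h1 : ‖d i * y i‖ = |d i| * ‖y i‖ := by
      rw [norm_mul]; rfl
    rw [h1]
    have : (|d i| * ‖y i‖) ^ 2 = |d i| ^ 2 * ‖y i‖ ^ 2 := by ring
    rw [this]
    apply mul_le_mul_of_nonneg_right _ (sq_nonneg _)
    exact pow_le_pow_left₀ (abs_nonneg _) (hd i) 2
  calc Real.sqrt (∑ i, ‖(toEuclideanLin (Matrix.diagonal d) y) i‖ ^ 2)
      ≤ Real.sqrt (c ^ 2 * ∑ i, ‖y i‖ ^ 2) := Real.sqrt_le_sqrt hsum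
    _ = c * Real.sqrt (∑ i, ‖y i‖ ^ 2) := by
        rw [Real.sqrt_mul (sq_nonneg c), Real.sqrt_sq hc]


lemma range_eq (U : Matrix (Fin n) (Fin r) ℝ) (V : Matrix (Fin m) (Fin r) ℝ)
    (σv : Fin r → ℝ) (hV : Vᵀ * V = 1) (hσ : ∀ i, σv i ≠ 0) :
    LinearMap.range (toEuclideanLin (U * Matrix.diagonal σv * Vᵀ))
      = LinearMap.range (toEuclideanLin U) := by
  apply le_antisymm
  · rintro _ ⟨x, rfl⟩
    refine ⟨toEuclideanLin (Matrix.diagonal σv * Vᵀ) x, ?_⟩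
    rw [← toEL_mul, Matrix.mul_assoc]
  · rintro _ ⟨z, rfl⟩
    refine ⟨toEuclideanLin (V * Matrix.diagonal (fun i => (σv i)⁻¹)) z, ?_⟩
    rw [← toEL_mul]
    congr 1
    have h1 : U * Matrix.diagonal σv * Vᵀ * (V * Matrix.diagonal fun i => (σv i)⁻¹)
        = U * Matrix.diagonal σv * (Vᵀ * V) * Matrix.diagonal (fun i => (σv i)⁻¹) := by
      simp only [Matrix.mul_assoc]
    rw [h1, hV, Matrix.mul_one, Matrix.mul_assoc, Matrix.diagonal_mul_diagonal]
    have h2 : (fun i => σv i * (σv i)⁻¹) = fun _ => (1:ℝ) := by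
      funext i; exact mul_inv_cancel₀ (hσ i)
    rw [h2, Matrix.diagonal_one, Matrix.mul_one]

lemma proj_formula (U : Matrix (Fin n) (Fin r) ℝ) (hU : Uᵀ * U = 1)
    (w : EuclideanSpace ℝ (Fin n)) :
    (Submodule.orthogonalProjectionOnto (LinearMap.range (toEuclideanLin U)) w : EuclideanSpace ℝ (Fin n))
      = toEuclideanLin (U * Uᵀ) w := by
  refine Submodule.eq_starProjection_of_mem_of_inner_eq_zero ?_ ?_
  · exact ⟨toEuclideanLin (Uᵀ) w, (toEL_mul _ _ _).symm⟩
  · rintro _ ⟨z, rfl⟩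
    rw [real_inner_comm, inner_transpose]
    have h1 : toEuclideanLin (Uᵀ) (w - toEuclideanLin (U * Uᵀ) w) = 0 := by
      rw [map_sub, ← toEL_mul, ← Matrix.mul_assoc, hU, Matrix.one_mul, sub_self]
    rw [h1, inner_zero_right]

lemma perp_formula (U : Matrix (Fin n) (Fin r) ℝ) (hU : Uᵀ * U = 1)
    (w : EuclideanSpace ℝ (Fin n)) :
    (Submodule.orthogonalProjectionOnto (LinearMap.range (toEuclideanLin U))ᗮ w : EuclideanSpace ℝ (Fin n))
      = w - toEuclideanLin (U * Uᵀ) w := by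
  change Submodule.starProjection _ w = _
  rw [Submodule.starProjection_orthogonal_val, ← proj_formula U hU w]
  rfl


lemma contraction (U : Matrix (Fin n) (Fin r) ℝ) (V : Matrix (Fin m) (Fin r) ℝ)
    (σv : Fin r → ℝ) (α σmin σmax C : ℝ)
    (hU : Uᵀ * U = 1) (hV : Vᵀ * V = 1)
    (hσlow : ∀ i, σmin ≤ σv i) (hσhigh : ∀ i, σv i ≤ σmax)
    (hσmin : 0 < σmin) (hσc : σmin ≤ σmax) (hα : 0 < α) (hασ : α * σmax ≤ 1)
    (w : EuclideanSpace ℝ (Fin n))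
    (hperpw : ‖(Submodule.orthogonalProjectionOnto
        (LinearMap.range (toEuclideanLin (U * Matrix.diagonal σv * Vᵀ)))ᗮ w :
        EuclideanSpace ℝ (Fin n))‖ ≤ C) :
    ‖w - α • toEuclideanLin (U * Matrix.diagonal σv * Vᵀ) (toEuclideanLin (V * Uᵀ) w)‖
      ≤ (1 - α * σmin) * ‖w‖ + C := by
  have hJ1 : toEuclideanLin (U * Matrix.diagonal σv * Vᵀ) (toEuclideanLin (V * Uᵀ) w)
      = toEuclideanLin (U * Matrix.diagonal σv * Uᵀ) w := by
    rw [← toEL_mul, show U * Matrix.diagonal σv * Vᵀ * (V * Uᵀ)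
        = U * Matrix.diagonal σv * Uᵀ by
      calc U * Matrix.diagonal σv * Vᵀ * (V * Uᵀ)
          = U * Matrix.diagonal σv * ((Vᵀ * V) * Uᵀ) := by simp only [Matrix.mul_assoc]
        _ = U * Matrix.diagonal σv * Uᵀ := by rw [hV, Matrix.one_mul]]
  have hmat : U * Matrix.diagonal (fun i => 1 - α * σv i) * Uᵀ
      = U * Uᵀ - α • (U * Matrix.diagonal σv * Uᵀ) := by
    have hd : Matrix.diagonal (fun i => 1 - α * σv i)
        = (1 : Matrix (Fin r) (Fin r) ℝ) - α • Matrix.diagonal σv := by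
      rw [← Matrix.diagonal_one, ← Matrix.diagonal_smul, ← Matrix.diagonal_sub]
      rfl
    rw [hd, Matrix.mul_sub, Matrix.sub_mul, Matrix.mul_one]
    rw [Matrix.mul_smul, Matrix.smul_mul]
  have hdecomp : w - α • toEuclideanLin (U * Matrix.diagonal σv * Uᵀ) w
      = (w - toEuclideanLin (U * Uᵀ) w)
        + toEuclideanLin (U * Matrix.diagonal (fun i => 1 - α * σv i) * Uᵀ) w := by
    rw [hmat, map_sub, _root_.map_smul, LinearMap.sub_apply, LinearMap.smul_apply]
    abel
  rw [hJ1, hdecomp]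
  have hrange := range_eq U V σv hV (fun i => ne_of_gt (lt_of_lt_of_le hσmin (hσlow i)))
  replace hperpw : ‖(Submodule.orthogonalProjectionOnto (LinearMap.range (toEuclideanLin U))ᗮ w :
      EuclideanSpace ℝ (Fin n))‖ ≤ C := by
    have key : ∀ K : Submodule ℝ (EuclideanSpace ℝ (Fin n)), K = LinearMap.range (toEuclideanLin U) →
        ‖(Kᗮ.orthogonalProjectionOnto w : EuclideanSpace ℝ (Fin n))‖ ≤ C →
        ‖(Submodule.orthogonalProjectionOnto (LinearMap.range (toEuclideanLin U))ᗮ w :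
          EuclideanSpace ℝ (Fin n))‖ ≤ C := by
      rintro K rfl h; exact h
    exact key _ hrange hperpw
  rw [perp_formula U hU] at hperpw
  have hb2 : ‖toEuclideanLin (U * Matrix.diagonal (fun i => 1 - α * σv i) * Uᵀ) w‖
      ≤ (1 - α * σmin) * ‖w‖ := by
    have hc : (0:ℝ) ≤ 1 - α * σmin := by
      nlinarith
    rw [toEL_mul, toEL_mul, isometry_of_orth U hU]
    calc ‖toEuclideanLin (Matrix.diagonal fun i => 1 - α * σv i) (toEuclideanLin (Uᵀ) w)‖
        ≤ (1 - α * σmin) * ‖toEuclideanLin (Uᵀ) w‖ := by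
          apply diag_contract _ _ hc
          intro i
          rw [abs_le]
          constructor
          · nlinarith [hσhigh i, hσlow i]
          · nlinarith [hσlow i]
      _ ≤ (1 - α * σmin) * ‖w‖ :=
          mul_le_mul_of_nonneg_left (transpose_contract U hU w) hc
  calc ‖(w - toEuclideanLin (U * Uᵀ) w)
        + toEuclideanLin (U * Matrix.diagonal (fun i => 1 - α * σv i) * Uᵀ) w‖
      ≤ ‖toEuclideanLin (U * Matrix.diagonal (fun i => 1 - α * σv i) * Uᵀ) w‖
        + ‖w - toEuclideanLin (U * Uᵀ) w‖ := by
        rw [add_comm]; exact norm_add_le _ _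
    _ ≤ (1 - α * σmin) * ‖w‖ + C := add_le_add hb2 hperpw



variable {n m : ℕ}

lemma mulVecCLM_norm_le {M : Matrix (Fin n) (Fin m) ℝ} (x : EuclideanSpace ℝ (Fin m)) :
    ‖mulVecCLM M x‖ ≤ ‖M‖ * ‖x‖ := by
  exact Matrix.l2_opNorm_mulVec M x

lemma mulVecCLM_sub (A B : Matrix (Fin n) (Fin m) ℝ) :
    mulVecCLM (A - B) = mulVecCLM A - mulVecCLM B := by
  unfold mulVecCLM
  rw [map_sub, map_sub]

lemma taylor_bound (F : EuclideanSpace ℝ (Fin m) → EuclideanSpace ℝ (Fin n))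
    (J : EuclideanSpace ℝ (Fin m) → Matrix (Fin n) (Fin m) ℝ)
    (hF : ContDiff ℝ 2 F)
    (hJ : ∀ θ, HasFDerivAt F (mulVecCLM (J θ)) θ)
    (L : ℝ) (hL : 0 ≤ L) (x y : EuclideanSpace ℝ (Fin m)) (s : Set (EuclideanSpace ℝ (Fin m)))
    (hs : Convex ℝ s) (hxs : x ∈ s) (hys : y ∈ s)
    (hLip : ∀ a ∈ s, ‖J a - J x‖ ≤ L * ‖a - x‖) :
    ‖F y - F x - mulVecCLM (J x) (y - x)‖ ≤ L / 2 * ‖y - x‖ ^ 2 := by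
  set d := y - x with hd
  set γ : ℝ → EuclideanSpace ℝ (Fin m) := fun t => x + t • d with hγ
  have hγmem : ∀ t ∈ Set.Icc (0:ℝ) 1, γ t ∈ s := by
    intro t ht
    have : γ t = (1 - t) • x + t • y := by
      simp only [hγ, hd]
      module
    rw [this]
    exact hs hxs hys (by linarith [ht.2]) ht.1 (by ring)
  have hγderiv : ∀ t : ℝ, HasDerivAt γ d t := by
    intro t
    simpa only [id, one_smul] using ((hasDerivAt_id t).smul_const d).const_add x
  set g : ℝ → EuclideanSpace ℝ (Fin n) :=
    fun t => F (γ t) - t • (mulVecCLM (J x) d) with hg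
  set g' : ℝ → EuclideanSpace ℝ (Fin n) :=
    fun t => mulVecCLM (J (γ t)) d - mulVecCLM (J x) d with hg'
  have hgderiv : ∀ t : ℝ, HasDerivAt g (g' t) t := by
    intro t
    have h2 : HasDerivAt (fun t : ℝ => t • (mulVecCLM (J x) d)) (mulVecCLM (J x) d) t := by
      simpa using (hasDerivAt_id t).smul_const (mulVecCLM (J x) d)
    exact ((hJ (γ t)).comp_hasDerivAt t (hγderiv t)).sub h2
  -- continuity of g'
  have hfd : ∀ a, mulVecCLM (J a) = fderiv ℝ F a := fun a => ((hJ a).fderiv).symm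
  have hcont : Continuous g' := by
    have h1 : Continuous fun t => (fderiv ℝ F (γ t)) d := by
      apply Continuous.comp (ContinuousLinearMap.apply ℝ _ d).continuous
      exact (hF.continuous_fderiv two_ne_zero).comp
        (continuous_const.add (continuous_id.smul continuous_const))
    simp only [hg', hfd]
    exact h1.sub continuous_const
  have hFTC : ∫ t in (0:ℝ)..1, g' t = g 1 - g 0 :=
    intervalIntegral.integral_eq_sub_of_hasDerivAt (fun t _ => hgderiv t)
      (hcont.intervalIntegrable 0 1)
  have hg10 : g 1 - g 0 = F y - F x - mulVecCLM (J x) (y - x) := by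
    simp [hg, hγ, hd]
    abel
  have hbound : ∀ t ∈ Set.Ioc (0:ℝ) 1, ‖g' t‖ ≤ (L * ‖d‖ ^ 2) * t := by
    intro t ht
    have h1 : g' t = mulVecCLM (J (γ t) - J x) d := by
      rw [hg', mulVecCLM_sub, ContinuousLinearMap.sub_apply]
    rw [h1]
    calc ‖mulVecCLM (J (γ t) - J x) d‖ ≤ ‖J (γ t) - J x‖ * ‖d‖ := mulVecCLM_norm_le d
      _ ≤ (L * ‖γ t - x‖) * ‖d‖ := by
          apply mul_le_mul_of_nonneg_right _ (norm_nonneg d)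
          exact hLip (γ t) (hγmem t ⟨le_of_lt ht.1, ht.2⟩)
      _ = (L * ‖d‖ ^ 2) * t := by
          have : γ t - x = t • d := by simp [hγ]
          rw [this, norm_smul, Real.norm_eq_abs, abs_of_pos ht.1]
          ring
  have hintle : ‖∫ t in (0:ℝ)..1, g' t‖ ≤ |∫ t in (0:ℝ)..1, (L * ‖d‖ ^ 2) * t| := by
    apply intervalIntegral.norm_integral_le_abs_of_norm_le
    · rw [Set.uIoc_of_le (zero_le_one)]
      exact (MeasureTheory.ae_restrict_mem measurableSet_Ioc).mono fun t ht => hbound t ht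
    · exact (continuous_const.mul continuous_id).intervalIntegrable 0 1
  have hintval : ∫ t in (0:ℝ)..1, (L * ‖d‖ ^ 2) * t = L * ‖d‖ ^ 2 / 2 := by
    rw [intervalIntegral.integral_const_mul, integral_id]
    ring
  rw [← hg10, ← hFTC]
  calc ‖∫ t in (0:ℝ)..1, g' t‖ ≤ |L * ‖d‖ ^ 2 / 2| := by rw [← hintval]; exact hintle
    _ = L / 2 * ‖d‖ ^ 2 := by
        rw [abs_of_nonneg (by positivity : (0:ℝ) ≤ L * ‖d‖ ^ 2 / 2)]
        ring
    _ = L / 2 * ‖y - x‖ ^ 2 := by rw [hd]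


lemma SPGD_step {n m r : ℕ} (F : EuclideanSpace ℝ (Fin m) → EuclideanSpace ℝ (Fin n))
    (J : EuclideanSpace ℝ (Fin m) → Matrix (Fin n) (Fin m) ℝ)
    (Usvd : EuclideanSpace ℝ (Fin m) → Matrix (Fin n) (Fin r) ℝ)
    (Vsvd : EuclideanSpace ℝ (Fin m) → Matrix (Fin m) (Fin r) ℝ)
    (σ : EuclideanSpace ℝ (Fin m) → Fin r → ℝ)
    (W : Set (EuclideanSpace ℝ (Fin m))) (σmin σmax L_J Cperp α : ℝ)
    (hF : ContDiff ℝ 2 F)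
    (hJ : ∀ θ, HasFDerivAt F (mulVecCLM (J θ)) θ)
    (hSVD : ∀ θ ∈ W, J θ = Usvd θ * Matrix.diagonal (σ θ) * (Vsvd θ)ᵀ)
    (hU : ∀ θ ∈ W, (Usvd θ)ᵀ * Usvd θ = 1) (hV : ∀ θ ∈ W, (Vsvd θ)ᵀ * Vsvd θ = 1)
    (hσmin : 0 < σmin) (hσc : σmin ≤ σmax)
    (hσ : ∀ θ ∈ W, ∀ i, σmin ≤ σ θ i ∧ σ θ i ≤ σmax)
    (hLip : ∀ θ₁ ∈ W, ∀ θ₂ ∈ W, ‖J θ₁ - J θ₂‖ ≤ L_J * ‖θ₁ - θ₂‖)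
    (hL : 0 ≤ L_J)
    (hperp : ∀ θ ∈ W,
      ‖(Submodule.orthogonalProjectionOnto (LinearMap.range (Matrix.toEuclideanLin (J θ)))ᗮ (F θ) :
          EuclideanSpace ℝ (Fin n))‖ ≤ Cperp * ‖F θ‖ ^ 2)
    (hα_pos : 0 < α) (hασ : α * σmax ≤ 1)
    (hsmall : ∀ θ ∈ W, (Cperp + L_J * α ^ 2 / 2) * ‖F θ‖ ≤ α * σmin / 2)
    (s : Set (EuclideanSpace ℝ (Fin m))) (hs : Convex ℝ s) (hsW : s ⊆ W)
    (x : EuclideanSpace ℝ (Fin m)) (hx : x ∈ s)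
    (hx' : x - α • Matrix.toEuclideanLin (Vsvd x * (Usvd x)ᵀ) (F x) ∈ s) :
    ‖F (x - α • Matrix.toEuclideanLin (Vsvd x * (Usvd x)ᵀ) (F x))‖
      ≤ (1 - α * σmin / 2) * ‖F x‖ := by
  have hxW : x ∈ W := hsW hx
  set x' := x - α • Matrix.toEuclideanLin (Vsvd x * (Usvd x)ᵀ) (F x) with hx'def
  -- step length bound
  have hVUF : ‖Matrix.toEuclideanLin (Vsvd x * (Usvd x)ᵀ) (F x)‖ ≤ ‖F x‖ := by
    rw [toEL_mul, isometry_of_orth (Vsvd x) (hV x hxW)]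
    exact transpose_contract (Usvd x) (hU x hxW) (F x)
  have hstep : ‖x' - x‖ ≤ α * ‖F x‖ := by
    have : x' - x = -(α • Matrix.toEuclideanLin (Vsvd x * (Usvd x)ᵀ) (F x)) := by
      rw [hx'def]; abel
    rw [this, norm_neg, norm_smul, Real.norm_eq_abs, abs_of_pos hα_pos]
    exact mul_le_mul_of_nonneg_left hVUF (le_of_lt hα_pos)
  -- Taylor
  have htay : ‖F x' - F x - mulVecCLM (J x) (x' - x)‖ ≤ L_J / 2 * ‖x' - x‖ ^ 2 :=
    taylor_bound F J hF hJ L_J hL x x' s hs hx hx'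
      (fun a ha => hLip a (hsW ha) x hxW)
  -- linear part
  have hlin : F x + mulVecCLM (J x) (x' - x)
      = F x - α • Matrix.toEuclideanLin (J x)
          (Matrix.toEuclideanLin (Vsvd x * (Usvd x)ᵀ) (F x)) := by
    have h1 : x' - x = -(α • Matrix.toEuclideanLin (Vsvd x * (Usvd x)ᵀ) (F x)) := by
      rw [hx'def]; abel
    rw [h1, map_neg, _root_.map_smul]
    have h2 : ∀ v, mulVecCLM (J x) v = Matrix.toEuclideanLin (J x) v := fun v => rfl
    rw [h2]
    abel
  have hcontr : ‖F x - α • Matrix.toEuclideanLin (J x)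
      (Matrix.toEuclideanLin (Vsvd x * (Usvd x)ᵀ) (F x))‖
      ≤ (1 - α * σmin) * ‖F x‖ + Cperp * ‖F x‖ ^ 2 := by
    have hp := hperp x hxW
    rw [hSVD x hxW] at hp ⊢
    exact contraction (Usvd x) (Vsvd x) (σ x) α σmin σmax (Cperp * ‖F x‖ ^ 2)
      (hU x hxW) (hV x hxW) (fun i => (hσ x hxW i).1) (fun i => (hσ x hxW i).2)
      hσmin hσc hα_pos hασ (F x) hp
  -- combine
  have hFx' : ‖F x'‖ ≤ (1 - α * σmin) * ‖F x‖ + Cperp * ‖F x‖ ^ 2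
      + L_J / 2 * ‖x' - x‖ ^ 2 := by
    calc ‖F x'‖ = ‖(F x + mulVecCLM (J x) (x' - x))
          + (F x' - F x - mulVecCLM (J x) (x' - x))‖ := by congr 1; abel
      _ ≤ ‖F x + mulVecCLM (J x) (x' - x)‖
          + ‖F x' - F x - mulVecCLM (J x) (x' - x)‖ := norm_add_le _ _
      _ ≤ ((1 - α * σmin) * ‖F x‖ + Cperp * ‖F x‖ ^ 2) + L_J / 2 * ‖x' - x‖ ^ 2 := by
          apply add_le_add _ htay
          rw [hlin]; exact hcontr
  have hrem : L_J / 2 * ‖x' - x‖ ^ 2 ≤ L_J * α ^ 2 / 2 * ‖F x‖ ^ 2 := by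
    have h1 : ‖x' - x‖ ^ 2 ≤ (α * ‖F x‖) ^ 2 := by
      apply pow_le_pow_left₀ (norm_nonneg _) hstep
    nlinarith
  have hsm := hsmall x hxW
  nlinarith [norm_nonneg (F x), hFx']

end SPGDaux

set_option maxHeartbeats 1000000 in
open SPGDaux in
lemma spgd_main_case
    {n m r : ℕ} {F : EuclideanSpace ℝ (Fin m) → EuclideanSpace ℝ (Fin n)}
    {θstar : EuclideanSpace ℝ (Fin m)}
    {J : EuclideanSpace ℝ (Fin m) → Matrix (Fin n) (Fin m) ℝ}
    {Usvd : EuclideanSpace ℝ (Fin m) → Matrix (Fin n) (Fin r) ℝ}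
    {Vsvd : EuclideanSpace ℝ (Fin m) → Matrix (Fin m) (Fin r) ℝ}
    {σ : EuclideanSpace ℝ (Fin m) → Fin r → ℝ}
    {W : Set (EuclideanSpace ℝ (Fin m))} {σmin σmax L_J Cperp α : ℝ}
    (hF : ContDiff ℝ 2 F) (hFzero : F θstar = 0)
    (hθW : θstar ∈ W)
    (hJ : ∀ θ, HasFDerivAt F (mulVecCLM (J θ)) θ)
    (hSVD : ∀ θ ∈ W, J θ = Usvd θ * Matrix.diagonal (σ θ) * (Vsvd θ)ᵀ)
    (hU : ∀ θ ∈ W, (Usvd θ)ᵀ * Usvd θ = 1) (hV : ∀ θ ∈ W, (Vsvd θ)ᵀ * Vsvd θ = 1)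
    (hσmin : 0 < σmin) (hσ : ∀ θ ∈ W, ∀ i, σmin ≤ σ θ i ∧ σ θ i ≤ σmax)
    (hLip : ∀ θ₁ ∈ W, ∀ θ₂ ∈ W, ‖J θ₁ - J θ₂‖ ≤ L_J * ‖θ₁ - θ₂‖)
    (hperp : ∀ θ ∈ W,
      ‖(Submodule.orthogonalProjectionOnto (LinearMap.range (Matrix.toEuclideanLin (J θ)))ᗮ (F θ) :
          EuclideanSpace ℝ (Fin n))‖ ≤ Cperp * ‖F θ‖ ^ 2)
    (hα_pos : 0 < α) (hα_le : α ≤ 1 / σmax)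
    (hsmall : ∀ θ ∈ W, (Cperp + L_J * α ^ 2 / 2) * ‖F θ‖ ≤ α * σmin / 2)
    (ρ0 : ℝ) (hρ0pos : ρ0 > 0) (hρ0 : Metric.ball θstar ρ0 ⊆ W)
    (hm : m > 0) (hr : r > 0) :
    ∃ Uα : Set (EuclideanSpace ℝ (Fin m)), IsOpen Uα ∧ Uα ⊆ W ∧ θstar ∈ Uα ∧
      ∀ θ : ℕ → EuclideanSpace ℝ (Fin m), θ 0 ∈ Uα →
        (∀ t : ℕ, θ (t + 1) =
          θ t - α • Matrix.toEuclideanLin (Vsvd (θ t) * (Usvd (θ t))ᵀ) (F (θ t))) →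
        (∀ t : ℕ, θ t ∈ W) ∧
        (∀ t : ℕ, ‖F (θ t)‖ ≤ (1 - α * σmin / 2) ^ t * ‖F (θ 0)‖) ∧
        (∀ t : ℕ, (1 / 2 : ℝ) * ‖F (θ t)‖ ^ 2 ≤
          (1 - α * σmin / 2) ^ t * ((1 / 2 : ℝ) * ‖F (θ 0)‖ ^ 2)) := by
  -- main case
  have hL : 0 ≤ L_J := by
    set u : EuclideanSpace ℝ (Fin m) := EuclideanSpace.single ⟨0, hm⟩ (1:ℝ) with hu
    have hun : ‖u‖ = 1 := by rw [hu, EuclideanSpace.norm_single]; norm_num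
    set p : EuclideanSpace ℝ (Fin m) := θstar + (ρ0/2) • u with hp
    have hpnorm : ‖p - θstar‖ = ρ0/2 := by
      rw [hp, add_sub_cancel_left, norm_smul, hun, Real.norm_eq_abs,
        abs_of_pos (by linarith)]
      ring
    have hpW : p ∈ W := by
      apply hρ0
      rw [Metric.mem_ball, dist_eq_norm, hpnorm]
      linarith
    have h1 := hLip p hpW θstar hθW
    rw [hpnorm] at h1
    nlinarith [norm_nonneg (J p - J θstar)]
  have hσc : σmin ≤ σmax :=
    le_trans (hσ θstar hθW ⟨0, hr⟩).1 (hσ θstar hθW ⟨0, hr⟩).2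
  have hσmaxpos : 0 < σmax := lt_of_lt_of_le hσmin hσc
  have hασ : α * σmax ≤ 1 := by
    rw [le_div_iff₀ hσmaxpos] at hα_le
    linarith
  set κ : ℝ := 1 - α * σmin / 2 with hκdef
  have hκlt1 : κ < 1 := by
    have : 0 < α * σmin := mul_pos hα_pos hσmin
    rw [hκdef]; linarith
  have hασmin : α * σmin ≤ 1 := by
    have := mul_le_mul_of_nonneg_left hσc (le_of_lt hα_pos)
    linarith
  have hκ0 : 0 ≤ κ := by rw [hκdef]; linarith
  set ρ : ℝ := ρ0 / 2 with hρdef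
  have hρpos : 0 < ρ := by rw [hρdef]; linarith
  have hcb : Metric.closedBall θstar ρ ⊆ W := by
    intro y hy
    apply hρ0
    rw [Metric.mem_ball]
    rw [Metric.mem_closedBall] at hy
    rw [hρdef] at hy
    linarith
  set ε : ℝ := ρ * σmin / 8 with hεdef
  have hεpos : 0 < ε := by rw [hεdef]; positivity
  set δ : ℝ := ρ / 2 with hδdef
  have hδpos : 0 < δ := by rw [hδdef]; linarith
  refine ⟨Metric.ball θstar δ ∩ F ⁻¹' Metric.ball 0 ε,
    Metric.isOpen_ball.inter (hF.continuous.isOpen_preimage _ Metric.isOpen_ball),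
    fun y hy => hcb (by
      have := Metric.mem_ball.mp hy.1
      rw [Metric.mem_closedBall]
      rw [hδdef] at this
      linarith),
    ⟨Metric.mem_ball_self hδpos, by
      simp only [Set.mem_preimage, hFzero, Metric.mem_ball, dist_self]
      exact hεpos⟩,
    fun θ hθ0 hrec => ?_⟩
  have hF0ε : ‖F (θ 0)‖ < ε := by
    have := hθ0.2
    simpa [Metric.mem_ball, dist_zero_right] using this
  have hθ0δ : dist (θ 0) θstar < δ := Metric.mem_ball.mp hθ0.1
  -- geometric sum bound
  have hSle : ∀ t : ℕ, (∑ s ∈ Finset.range t, κ ^ s) ≤ 2 / (α * σmin) := by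
    intro t
    rw [geom_sum_eq (ne_of_lt hκlt1) t]
    have hform : (κ ^ t - 1) / (κ - 1) = (1 - κ ^ t) * (2 / (α * σmin)) := by
      have hne : α * σmin ≠ 0 := ne_of_gt (mul_pos hα_pos hσmin)
      have hκ1 : κ - 1 = -(α * σmin / 2) := by rw [hκdef]; ring
      rw [hκ1]
      field_simp
      ring
    rw [hform]
    have h1 : 1 - κ ^ t ≤ 1 := by
      have := pow_nonneg hκ0 t
      linarith
    have h2 : (0:ℝ) ≤ 2 / (α * σmin) := by positivity
    nlinarith
  have hSnonneg : ∀ t : ℕ, (0:ℝ) ≤ ∑ s ∈ Finset.range t, κ ^ s :=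
    fun t => Finset.sum_nonneg fun s _ => pow_nonneg hκ0 s
  have hbound : ∀ t : ℕ, δ + α * ‖F (θ 0)‖ * (∑ s ∈ Finset.range t, κ ^ s) ≤ ρ := by
    intro t
    have h1 : α * ‖F (θ 0)‖ * (∑ s ∈ Finset.range t, κ ^ s)
        ≤ α * ε * (2 / (α * σmin)) := by
      apply mul_le_mul
      · exact mul_le_mul_of_nonneg_left (le_of_lt hF0ε) (le_of_lt hα_pos)
      · exact hSle t
      · exact hSnonneg t
      · positivity
    have h2 : α * ε * (2 / (α * σmin)) = ρ / 4 := by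
      rw [hεdef]
      field_simp
      ring
    rw [hδdef]
    linarith
  -- the invariant
  have key : ∀ t : ℕ, ‖F (θ t)‖ ≤ κ ^ t * ‖F (θ 0)‖ ∧
      dist (θ t) θstar ≤ δ + α * ‖F (θ 0)‖ * ∑ s ∈ Finset.range t, κ ^ s := by
    intro t
    induction t with
    | zero =>
      constructor
      · simp
      · simpa using le_of_lt hθ0δ
    | succ t ih =>
      obtain ⟨ihF, ihd⟩ := ih
      have hθtρ : dist (θ t) θstar ≤ ρ := le_trans ihd (hbound t)
      have hθtB : θ t ∈ Metric.closedBall θstar ρ := Metric.mem_closedBall.mpr hθtρ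
      have hθtW : θ t ∈ W := hcb hθtB
      have hVUF : ‖Matrix.toEuclideanLin (Vsvd (θ t) * (Usvd (θ t))ᵀ) (F (θ t))‖
          ≤ ‖F (θ t)‖ := by
        rw [toEL_mul, isometry_of_orth (Vsvd (θ t)) (hV (θ t) hθtW)]
        exact transpose_contract (Usvd (θ t)) (hU (θ t) hθtW) (F (θ t))
      have hstepnorm : dist (θ (t+1)) (θ t) ≤ α * ‖F (θ t)‖ := by
        rw [hrec t, dist_eq_norm]
        have heq : θ t - α • Matrix.toEuclideanLin (Vsvd (θ t) * (Usvd (θ t))ᵀ) (F (θ t))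
            - θ t = -(α • Matrix.toEuclideanLin (Vsvd (θ t) * (Usvd (θ t))ᵀ) (F (θ t))) := by
          abel
        rw [heq, norm_neg, norm_smul, Real.norm_eq_abs, abs_of_pos hα_pos]
        exact mul_le_mul_of_nonneg_left hVUF (le_of_lt hα_pos)
      have hαF : α * ‖F (θ t)‖ ≤ α * (κ ^ t * ‖F (θ 0)‖) :=
        mul_le_mul_of_nonneg_left ihF (le_of_lt hα_pos)
      have hdist1 : dist (θ (t+1)) θstar
          ≤ δ + α * ‖F (θ 0)‖ * ∑ s ∈ Finset.range (t+1), κ ^ s := by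
        have htri := dist_triangle (θ (t+1)) (θ t) θstar
        rw [Finset.sum_range_succ]
        have : δ + α * ‖F (θ 0)‖ * (∑ s ∈ Finset.range t, κ ^ s + κ ^ t)
            = (δ + α * ‖F (θ 0)‖ * ∑ s ∈ Finset.range t, κ ^ s)
              + α * (κ ^ t * ‖F (θ 0)‖) := by ring
        rw [this]
        linarith
      have hθt1B : θ (t+1) ∈ Metric.closedBall θstar ρ :=
        Metric.mem_closedBall.mpr (le_trans hdist1 (hbound (t+1)))
      have hstep : ‖F (θ (t+1))‖ ≤ κ * ‖F (θ t)‖ := by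
        rw [hrec t]
        rw [hκdef]
        apply SPGD_step F J Usvd Vsvd σ W σmin σmax L_J Cperp α hF hJ hSVD hU hV
          hσmin hσc hσ hLip hL hperp hα_pos hασ hsmall
          (Metric.closedBall θstar ρ) (convex_closedBall θstar ρ) hcb
          (θ t) hθtB
        rw [← hrec t]
        exact hθt1B
      refine ⟨?_, hdist1⟩
      calc ‖F (θ (t+1))‖ ≤ κ * ‖F (θ t)‖ := hstep
        _ ≤ κ * (κ ^ t * ‖F (θ 0)‖) := mul_le_mul_of_nonneg_left ihF hκ0
        _ = κ ^ (t+1) * ‖F (θ 0)‖ := by ring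
  refine ⟨fun t => hcb (Metric.mem_closedBall.mpr (le_trans (key t).2 (hbound t))),
    fun t => (key t).1, fun t => ?_⟩
  have h1 := (key t).1
  have h2 : κ ^ t ≤ 1 := pow_le_one₀ hκ0 (le_of_lt hκlt1)
  have h3 : (0:ℝ) ≤ κ ^ t := pow_nonneg hκ0 t
  have h4 : ‖F (θ t)‖ ^ 2 ≤ (κ ^ t * ‖F (θ 0)‖) ^ 2 :=
    pow_le_pow_left₀ (norm_nonneg _) h1 2
  have h5 : κ ^ t * κ ^ t ≤ κ ^ t := by nlinarith
  nlinarith [h4, h5, sq_nonneg (‖F (θ 0)‖)]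

/-- **Local linear convergence of the SPGD method near a regular equilibrium.**
Let `F : ℝ^m → ℝ^n` be `C²` with `F(θ*) = 0`, let `W` be a precompact open neighborhood of
`θ*` on which the Jacobian `J_F` admits a rank-`r` economy SVD `J_F(θ) = U(θ) Σ(θ) V(θ)ᵀ`
with singular values in `[σ_min, σ_max]`, let `J_F` be `L_J`-Lipschitz in spectral norm on
`W`, and assume the orthogonal residual bound with constant `C⊥ > 0` on `W`. If
`0 < α ≤ 1/σ_max` and `(C⊥ + L_J α²/2) ‖F(θ)‖ ≤ α σ_min/2` on `W`, then there is an open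
neighborhood `U_α ⊆ W` of `θ*` such that every SPGD trajectory started in `U_α` stays in
`W` and satisfies `‖F(θ_t)‖ ≤ (1 − α σ_min/2)^t ‖F(θ₀)‖`, hence
`f(θ_t) ≤ (1 − α σ_min/2)^t f(θ₀)` for `f = ½‖F‖²`. -/
theorem spgd_local_linear_convergence
    (n m r : ℕ) (F : EuclideanSpace ℝ (Fin m) → EuclideanSpace ℝ (Fin n))
    (θstar : EuclideanSpace ℝ (Fin m))
    (J : EuclideanSpace ℝ (Fin m) → Matrix (Fin n) (Fin m) ℝ)
    (Usvd : EuclideanSpace ℝ (Fin m) → Matrix (Fin n) (Fin r) ℝ)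
    (Vsvd : EuclideanSpace ℝ (Fin m) → Matrix (Fin m) (Fin r) ℝ)
    (σ : EuclideanSpace ℝ (Fin m) → Fin r → ℝ)
    (W : Set (EuclideanSpace ℝ (Fin m))) (σmin σmax L_J Cperp α : ℝ)
    (hF : ContDiff ℝ 2 F) (hFzero : F θstar = 0)
    (hW_open : IsOpen W) (hθW : θstar ∈ W) (hW_precompact : IsCompact (closure W))
    (hJ : ∀ θ, HasFDerivAt F (mulVecCLM (J θ)) θ)
    (hSVD : ∀ θ ∈ W, J θ = Usvd θ * Matrix.diagonal (σ θ) * (Vsvd θ)ᵀ)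
    (hU : ∀ θ ∈ W, (Usvd θ)ᵀ * Usvd θ = 1) (hV : ∀ θ ∈ W, (Vsvd θ)ᵀ * Vsvd θ = 1)
    (hσmin : 0 < σmin) (hσ : ∀ θ ∈ W, ∀ i, σmin ≤ σ θ i ∧ σ θ i ≤ σmax)
    (hLip : ∀ θ₁ ∈ W, ∀ θ₂ ∈ W, ‖J θ₁ - J θ₂‖ ≤ L_J * ‖θ₁ - θ₂‖)
    (hCperp : 0 < Cperp)
    (hperp : ∀ θ ∈ W,
      ‖(Submodule.orthogonalProjectionOnto (LinearMap.range (Matrix.toEuclideanLin (J θ)))ᗮ (F θ) :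
          EuclideanSpace ℝ (Fin n))‖ ≤ Cperp * ‖F θ‖ ^ 2)
    (hα_pos : 0 < α) (hα_le : α ≤ 1 / σmax)
    (hsmall : ∀ θ ∈ W, (Cperp + L_J * α ^ 2 / 2) * ‖F θ‖ ≤ α * σmin / 2) :
    ∃ Uα : Set (EuclideanSpace ℝ (Fin m)), IsOpen Uα ∧ Uα ⊆ W ∧ θstar ∈ Uα ∧
      ∀ θ : ℕ → EuclideanSpace ℝ (Fin m), θ 0 ∈ Uα →
        (∀ t : ℕ, θ (t + 1) =
          θ t - α • Matrix.toEuclideanLin (Vsvd (θ t) * (Usvd (θ t))ᵀ) (F (θ t))) →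
        (∀ t : ℕ, θ t ∈ W) ∧
        (∀ t : ℕ, ‖F (θ t)‖ ≤ (1 - α * σmin / 2) ^ t * ‖F (θ 0)‖) ∧
        (∀ t : ℕ, (1 / 2 : ℝ) * ‖F (θ t)‖ ^ 2 ≤
          (1 - α * σmin / 2) ^ t * ((1 / 2 : ℝ) * ‖F (θ 0)‖ ^ 2)) := by
  obtain ⟨ρ0, hρ0pos, hρ0⟩ := Metric.isOpen_iff.mp hW_open θstar hθW
  rcases Nat.eq_zero_or_pos m with hm | hm
  · -- trivial case: the domain is a single point
    subst hm
    haveI : Subsingleton (EuclideanSpace ℝ (Fin 0)) := inferInstance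
    refine ⟨W, hW_open, subset_rfl, hθW, fun θ hθ0 hrec => ?_⟩
    have hθt : ∀ t, θ t = θstar := fun t => Subsingleton.elim _ _
    have hFt : ∀ t, F (θ t) = 0 := fun t => by rw [hθt t, hFzero]
    refine ⟨fun t => by rw [hθt t]; exact hθW, fun t => ?_, fun t => ?_⟩
    · rw [hFt t, hFt 0]; simp
    · rw [hFt t, hFt 0]; simp
  rcases Nat.eq_zero_or_pos r with hr | hr
  · -- degenerate case: the Jacobian vanishes identically near θstar
    subst hr
    have hJ0 : ∀ θ ∈ W, J θ = 0 := by
      intro θ hθ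
      rw [hSVD θ hθ]
      ext i j
      simp [Matrix.mul_apply]
    have hFz : ∀ y ∈ Metric.ball θstar ρ0, F y = 0 := by
      intro y hy
      have hmv : ∀ x ∈ Metric.ball θstar ρ0, ‖mulVecCLM (J x)‖ ≤ (0:ℝ) := by
        intro x hx
        rw [hJ0 x (hρ0 hx)]
        have : mulVecCLM (0 : Matrix (Fin n) (Fin m) ℝ) = 0 := by
          unfold mulVecCLM
          rw [map_zero, map_zero]
        rw [this, norm_zero]
      have := Convex.norm_image_sub_le_of_norm_hasFDerivWithin_le
        (f := F) (f' := fun x => mulVecCLM (J x)) (s := Metric.ball θstar ρ0)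
        (fun x _ => (hJ x).hasFDerivWithinAt) hmv (convex_ball θstar ρ0)
        (Metric.mem_ball_self hρ0pos) hy
      rw [hFzero, sub_zero, zero_mul] at this
      exact norm_le_zero_iff.mp this
    refine ⟨Metric.ball θstar ρ0, Metric.isOpen_ball, hρ0,
      Metric.mem_ball_self hρ0pos, fun θ hθ0 hrec => ?_⟩
    have hconst : ∀ t, θ t = θ 0 := by
      intro t
      induction t with
      | zero => rfl
      | succ t ih =>
        rw [hrec t, ih, hFz (θ 0) hθ0, map_zero, smul_zero, sub_zero]
    have hFt : ∀ t, F (θ t) = 0 := fun t => by rw [hconst t]; exact hFz (θ 0) hθ0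
    refine ⟨fun t => by rw [hconst t]; exact hρ0 hθ0, fun t => ?_, fun t => ?_⟩
    · rw [hFt t, hFt 0]; simp
    · rw [hFt t, hFt 0]; simp
  exact spgd_main_case hF hFzero hθW hJ hSVD hU hV hσmin hσ hLip hperp
    hα_pos hα_le hsmall ρ0 hρ0pos hρ0 hm hr
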